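/- The number of pairs (P, μ) where P is a Dyck path of length 2n and μ is a label in {1, ..., h} attached to a chosen peak of P of height h, equals 4^(n-1) for n ≥ 1. Equivalently, the sum over all Dyck paths of length 2n of the sum of the heights of all their peaks equals 4^(n-1). -/

import Mathlib

def IsStepWord (w : List ℤ) : Prop := ∀ s ∈ w, s = 1 ∨ s = -1

/-- partial sum (height) after `i` steps -/
def psum (w : List ℤ) (i : ℕ) : ℤ := (w.take i).sum

def IsDyckPath (w : List ℤ) : Prop :=
  IsStepWord w ∧ (∀ i, 0 ≤ psum w i) ∧ w.sum = 0

def IsBridge (w : List ℤ) : Prop := IsStepWord w ∧ w.sum = 0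

def IsPeak (w : List ℤ) (i : ℕ) : Prop := w[i]? = some 1 ∧ w[i+1]? = some (-1)

/-- height of the apex of the peak at position `i` -/
def peakHeight (w : List ℤ) (i : ℕ) : ℤ := psum w (i+1)

/-- number of crossings of the x-axis -/
def crossings (w : List ℤ) : ℕ :=
  ((Finset.range w.length).filter
    (fun i => psum w (i+1) = 0 ∧ psum w i * psum w (i+2) < 0)).card

open Finset

/-- step words of length n -/
def SW : ℕ → Finset (List ℤ)
  | 0 => {[]}
  | (n+1) => ((SW n).image (fun w => (1:ℤ) :: w)) ∪ ((SW n).image (fun w => (-1:ℤ) :: w))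

lemma mem_SW {n : ℕ} {w : List ℤ} : w ∈ SW n ↔ IsStepWord w ∧ w.length = n := by
  induction n generalizing w with
  | zero =>
    simp [SW, IsStepWord, List.length_eq_zero_iff]
    rintro rfl; simp
  | succ n ih =>
    simp only [SW, mem_union, mem_image]
    constructor
    · rintro (⟨v, hv, rfl⟩ | ⟨v, hv, rfl⟩) <;>
      · obtain ⟨h1, h2⟩ := ih.1 hv
        refine ⟨?_, by simp [h2]⟩
        intro s hs
        rcases List.mem_cons.1 hs with rfl | hs
        · simp
        · exact h1 s hs
    · rintro ⟨h1, h2⟩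
      match w with
      | [] => simp at h2
      | a :: v =>
        have hv : v ∈ SW n := ih.2 ⟨fun s hs => h1 s (List.mem_cons_of_mem _ hs), by simpa using h2⟩
        rcases h1 a (List.mem_cons_self) with rfl | rfl
        · exact Or.inl ⟨v, hv, rfl⟩
        · exact Or.inr ⟨v, hv, rfl⟩

@[simp] lemma psum_zero (w : List ℤ) : psum w 0 = 0 := rfl

@[simp] lemma psum_nil (i : ℕ) : psum [] i = 0 := by simp [psum]

lemma psum_cons (a : ℤ) (w : List ℤ) (i : ℕ) : psum (a :: w) (i+1) = a + psum w i := by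
  simp [psum]

lemma psum_of_length_le {w : List ℤ} {i : ℕ} (h : w.length ≤ i) : psum w i = w.sum := by
  simp [psum, List.take_of_length_le h]

lemma psum_append_left {x : List ℤ} (y : List ℤ) {i : ℕ} (h : i ≤ x.length) :
    psum (x ++ y) i = psum x i := by
  simp [psum, List.take_append, Nat.sub_eq_zero_of_le h]

lemma psum_append_right (x y : List ℤ) (i : ℕ) :
    psum (x ++ y) (x.length + i) = x.sum + psum y i := by
  simp [psum, List.take_append, List.take_of_length_le (Nat.le_add_right _ _)]

lemma psum_le (w : List ℤ) (hw : IsStepWord w) (i : ℕ) : psum w i ≤ i := by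
  have h1 : ∀ x ∈ w.take i, x ≤ (1:ℤ) := by
    intro x hx
    rcases hw x (List.mem_of_mem_take hx) with rfl | rfl <;> norm_num
  calc (w.take i).sum ≤ (w.take i).length • (1:ℤ) := List.sum_le_card_nsmul _ _ h1
    _ = ((w.take i).length : ℤ) := by simp
    _ ≤ i := by exact_mod_cast (List.length_take_le _ _)

lemma even_length_of_sum_eq_zero {w : List ℤ} (hw : IsStepWord w) (h : w.sum = 0) :
    Even w.length := by
  have key : ∀ v : List ℤ, IsStepWord v → Even (v.sum + v.length) := by
    intro v hv
    induction v with
    | nil => simp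
    | cons a u ih =>
      have hu := ih (fun s hs => hv s (List.mem_cons_of_mem _ hs))
      rcases hv a (List.mem_cons_self) with rfl | rfl
      · simpa [add_assoc, add_comm, add_left_comm, Int.even_add_one, parity_simps] using hu
      · simpa [add_assoc, add_comm, add_left_comm, parity_simps] using hu
  have := key w hw
  rw [h, zero_add] at this
  exact_mod_cast this

lemma sum_range_add' (f : ℕ → ℤ) (m n : ℕ) :
    ∑ i ∈ Finset.range (m+n), f i
      = (∑ i ∈ Finset.range m, f i) + ∑ i ∈ Finset.range n, f (m+i) := by
  rw [Finset.range_add, Finset.sum_union (by simp [Finset.disjoint_left]; omega), Finset.sum_map]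
  simp [Finset.sum_congr rfl]

open Classical in
/-- Dyck paths of length 2m -/
noncomputable def D (m : ℕ) : Finset (List ℤ) := (SW (2*m)).filter IsDyckPath

lemma mem_D {m : ℕ} {w : List ℤ} : w ∈ D m ↔ IsDyckPath w ∧ w.length = 2*m := by
  simp only [D, mem_filter, mem_SW]
  constructor
  · rintro ⟨⟨h1, h2⟩, h3⟩; exact ⟨h3, h2⟩
  · rintro ⟨h3, h2⟩; exact ⟨⟨h3.1, h2⟩, h3⟩

def glue (x y : List ℤ) : List ℤ := 1 :: x ++ (-1 :: y)

lemma glue_length (x y : List ℤ) : (glue x y).length = x.length + y.length + 2 := by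
  simp [glue]; ring

lemma psum_glue_left (x y : List ℤ) {s : ℕ} (h : s ≤ x.length) :
    psum (glue x y) (s+1) = 1 + psum x s := by
  have : glue x y = ((1:ℤ) :: x) ++ (-1 :: y) := by simp [glue]
  rw [this, psum_append_left _ (by simp; omega), psum_cons]

lemma psum_glue_right (x y : List ℤ) (r : ℕ) :
    psum (glue x y) (x.length + 2 + r) = x.sum + psum y r := by
  have h1 : glue x y = ((1:ℤ) :: x) ++ (-1 :: y) := by simp [glue]
  have h2 : x.length + 2 + r = ((1:ℤ) :: x).length + (r + 1) := by simp; ring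
  rw [h1, h2, psum_append_right, psum_cons]
  simp; ring

lemma glue_sum {x y : List ℤ} (hx : x.sum = 0) (hy : y.sum = 0) : (glue x y).sum = 0 := by
  simp [glue, hx, hy]

lemma glue_isDyck {x y : List ℤ} (hx : IsDyckPath x) (hy : IsDyckPath y) :
    IsDyckPath (glue x y) := by
  obtain ⟨hx1, hx2, hx3⟩ := hx
  obtain ⟨hy1, hy2, hy3⟩ := hy
  refine ⟨?_, ?_, glue_sum hx3 hy3⟩
  · intro s hs
    simp only [glue, List.cons_append, List.mem_cons, List.mem_append] at hs
    rcases hs with rfl | h | h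
    · left; rfl
    · exact hx1 s h
    · rcases h with rfl | h
      · right; rfl
      · exact hy1 s h
  · intro t
    rcases Nat.eq_zero_or_pos t with rfl | ht
    · simp
    rcases le_or_gt t (x.length + 1) with h | h
    · obtain ⟨s, rfl⟩ : ∃ s, t = s + 1 := ⟨t - 1, by omega⟩
      rw [psum_glue_left x y (by omega)]
      have := hx2 s; omega
    · obtain ⟨r, rfl⟩ : ∃ r, t = x.length + 2 + r := ⟨t - (x.length+2), by omega⟩
      rw [psum_glue_right, hx3]
      have := hy2 r; omega

lemma glue_mem_D {k j : ℕ} {x y : List ℤ} (hx : x ∈ D k) (hy : y ∈ D j) :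
    glue x y ∈ D (k + j + 1) := by
  rw [mem_D] at *
  exact ⟨glue_isDyck hx.1 hy.1, by rw [glue_length, hx.2, hy.2]; ring⟩

lemma psum_succ {w : List ℤ} {t : ℕ} (h : t < w.length) :
    psum w (t+1) = psum w t + w[t] := by
  rw [psum, psum, List.take_succ, List.sum_append, List.getElem?_eq_getElem h]
  simp

lemma psum_take (w : List ℤ) (k s : ℕ) : psum (w.take k) s = psum w (min s k) := by
  simp [psum, List.take_take]

lemma psum_drop (w : List ℤ) (k t : ℕ) : psum (w.drop k) t = psum w (k + t) - psum w k := by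
  have : psum w (k + t) = psum w k + psum (w.drop k) t := by
    rw [psum, psum, psum, List.take_add, List.sum_append]
  omega

lemma sum_drop (w : List ℤ) (k : ℕ) : (w.drop k).sum = w.sum - psum w k := by
  have := congrArg List.sum (List.take_append_drop k w)
  simp only [List.sum_append] at this
  simp [psum]; omega

lemma first_step {w : List ℤ} (hw : IsDyckPath w) (hlen : 0 < w.length) : w[0] = 1 := by
  have h1 : psum w 1 = w[0] := by
    have := psum_succ (w := w) (t := 0) hlen; simpa using this
  rcases hw.1 w[0] (w.getElem_mem hlen) with h | h
  · exact h
  · exfalso; have := hw.2.1 1; rw [h1, h] at this; omega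

lemma exists_return {w : List ℤ} (hw : IsDyckPath w) (hlen : 0 < w.length) :
    ∃ t, 0 < t ∧ psum w t = 0 :=
  ⟨w.length, hlen, by rw [psum_of_length_le le_rfl]; exact hw.2.2⟩

open Classical in
/-- first return to 0 -/
noncomputable def fr (w : List ℤ) : ℕ :=
  if h : ∃ t, 0 < t ∧ psum w t = 0 then Nat.find h else 0

section FR
variable {w : List ℤ}

lemma fr_spec (hw : IsDyckPath w) (hlen : 0 < w.length) : 0 < fr w ∧ psum w (fr w) = 0 := by
  rw [fr, dif_pos (exists_return hw hlen)]
  exact Nat.find_spec (exists_return hw hlen)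

lemma fr_min (hw : IsDyckPath w) (hlen : 0 < w.length) {t : ℕ} (h1 : 0 < t) (h2 : t < fr w) : psum w t ≠ 0 := by
  rw [fr, dif_pos (exists_return hw hlen)] at h2
  intro h
  exact Nat.find_min (exists_return hw hlen) h2 ⟨h1, h⟩

lemma fr_le (hw : IsDyckPath w) (hlen : 0 < w.length) : fr w ≤ w.length := by
  rw [fr, dif_pos (exists_return hw hlen)]
  exact Nat.find_min' _ ⟨hlen, by rw [psum_of_length_le le_rfl]; exact hw.2.2⟩

lemma psum_pos_before (hw : IsDyckPath w) (hlen : 0 < w.length) {t : ℕ} (h1 : 0 < t) (h2 : t < fr w) : 1 ≤ psum w t := by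
  have := fr_min hw hlen h1 h2
  have := hw.2.1 t
  omega

lemma fr_ge_two (hw : IsDyckPath w) (hlen : 0 < w.length) : 2 ≤ fr w := by
  have h1 := (fr_spec hw hlen).1
  have h2 := (fr_spec hw hlen).2
  by_contra h
  have h1' : fr w = 1 := by omega
  rw [h1', show (1:ℕ) = 0 + 1 from rfl, psum_succ hlen, first_step hw hlen] at h2
  simp at h2

lemma psum_fr_pred (hw : IsDyckPath w) (hlen : 0 < w.length) : psum w (fr w - 1) = 1 := by
  have h2 := fr_ge_two hw hlen
  have hl := fr_le hw hlen
  have hstep : psum w (fr w) = psum w (fr w - 1) + w[fr w - 1]'(by omega) := by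
    have := psum_succ (w := w) (t := fr w - 1) (by omega)
    rw [show fr w - 1 + 1 = fr w by omega] at this
    exact this
  have h0 := (fr_spec hw hlen).2
  have hpos := psum_pos_before hw hlen (t := fr w - 1) (by omega) (by omega)
  rcases hw.1 _ (w.getElem_mem (show fr w - 1 < w.length by omega)) with h | h <;> omega

end FR

/-- the two components of the first-return decomposition -/
noncomputable def frx (w : List ℤ) : List ℤ := (w.drop 1).take (fr w - 2)

noncomputable def fry (w : List ℤ) : List ℤ := w.drop (fr w)

section FRXY
variable {w : List ℤ}

lemma frx_length (hw : IsDyckPath w) (hlen : 0 < w.length) : (frx w).length = fr w - 2 := by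
  have := fr_le hw hlen
  have := fr_ge_two hw hlen
  simp [frx]; omega

lemma fry_length (hw : IsDyckPath w) (hlen : 0 < w.length) : (fry w).length = w.length - fr w := by simp [fry]

lemma psum_frx (hw : IsDyckPath w) (hlen : 0 < w.length) {s : ℕ} (h : s ≤ fr w - 2) : psum (frx w) s = psum w (s+1) - 1 := by
  have h2 := fr_ge_two hw hlen
  rw [frx, psum_take, min_eq_left h, psum_drop]
  have h1 : psum w 1 = 1 := by
    have := psum_succ (w := w) (t := 0) hlen
    rw [first_step hw hlen] at this
    simpa using this
  rw [show 1 + s = s + 1 by omega, h1]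

lemma frx_isDyck (hw : IsDyckPath w) (hlen : 0 < w.length) : IsDyckPath (frx w) := by
  have h2 := fr_ge_two hw hlen
  have hle := fr_le hw hlen
  refine ⟨?_, ?_, ?_⟩
  · intro s hs
    exact hw.1 s (List.mem_of_mem_drop (List.mem_of_mem_take hs))
  · intro t
    rcases le_or_gt t (fr w - 2) with h | h
    · rw [psum_frx hw hlen h]
      have := psum_pos_before hw hlen (t := t + 1) (by omega) (by omega)
      omega
    · rw [psum_of_length_le (by rw [frx_length hw hlen]; omega)]
      have : psum (frx w) (fr w - 2) = (frx w).sum :=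
        psum_of_length_le (by rw [frx_length hw hlen])
      rw [← this, psum_frx hw hlen le_rfl, show fr w - 2 + 1 = fr w - 1 by omega,
        psum_fr_pred hw hlen]
      omega
  · have : psum (frx w) (fr w - 2) = (frx w).sum :=
      psum_of_length_le (by rw [frx_length hw hlen])
    rw [← this, psum_frx hw hlen le_rfl, show fr w - 2 + 1 = fr w - 1 by omega,
      psum_fr_pred hw hlen]
    norm_num

lemma fry_isDyck (hw : IsDyckPath w) (hlen : 0 < w.length) : IsDyckPath (fry w) := by
  have h0 := (fr_spec hw hlen).2
  refine ⟨?_, ?_, ?_⟩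
  · intro s hs; exact hw.1 s (List.mem_of_mem_drop hs)
  · intro t
    rw [fry, psum_drop, h0]
    have := hw.2.1 (fr w + t); omega
  · rw [fry, sum_drop, h0, hw.2.2]; ring

lemma glue_frx_fry (hw : IsDyckPath w) (hlen : 0 < w.length) : glue (frx w) (fry w) = w := by
  have h2 := fr_ge_two hw hlen
  have hle := fr_le hw hlen
  have e1 : w.drop (fr w - 1) = -1 :: fry w := by
    have hlt : fr w - 1 < w.length := by omega
    have := (List.getElem_cons_drop hlt).symm
    rw [show fr w - 1 + 1 = fr w by omega] at this
    have hstep : psum w (fr w) = psum w (fr w - 1) + w[fr w - 1] := by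
      have h := psum_succ (w := w) (t := fr w - 1) hlt
      rw [show fr w - 1 + 1 = fr w by omega] at h
      exact h
    have hv : w[fr w - 1] = -1 := by
      have := (fr_spec hw hlen).2
      have := psum_fr_pred hw hlen
      omega
    rw [hv] at this
    rw [fry]; exact this
  have e2 : w.drop 1 = frx w ++ w.drop (fr w - 1) := by
    have h := List.take_append_drop (fr w - 2) (w.drop 1)
    rw [List.drop_drop, show 1 + (fr w - 2) = fr w - 1 by omega] at h
    rw [frx]
    exact h.symm
  have e3 : w = 1 :: w.drop 1 := by
    have := (List.getElem_cons_drop hlen).symm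
    rw [first_step hw hlen] at this
    simpa using this
  rw [glue, ← e1]
  conv_rhs => rw [e3, e2]
  simp

end FRXY

lemma fr_glue {x y : List ℤ} (hx : IsDyckPath x) (hy : IsDyckPath y) :
    fr (glue x y) = x.length + 2 := by
  have hg := glue_isDyck hx hy
  have hex : ∃ t, 0 < t ∧ psum (glue x y) t = 0 :=
    exists_return hg (by rw [glue_length]; omega)
  rw [fr, dif_pos hex, Nat.find_eq_iff]
  constructor
  · refine ⟨by omega, ?_⟩
    have := psum_glue_right x y 0
    simpa [hx.2.2] using this
  · intro t ht hc
    obtain ⟨h1, h2⟩ := hc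
    obtain ⟨s, rfl⟩ : ∃ s, t = s + 1 := ⟨t-1, by omega⟩
    rw [psum_glue_left x y (by omega)] at h2
    have := hx.2.1 s
    omega

lemma frx_fry_mem {m : ℕ} {w : List ℤ} (hw : w ∈ D (m+1)) :
    ∃ k ≤ m, fr w = 2*k + 2 ∧ frx w ∈ D k ∧ fry w ∈ D (m - k) := by
  rw [mem_D] at hw
  obtain ⟨hd, hl⟩ := hw
  have hlen : 0 < w.length := by omega
  have h2 := fr_ge_two hd hlen
  have hle := fr_le hd hlen
  have hx := frx_isDyck hd hlen
  have hxl := frx_length hd hlen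
  have hyl := fry_length hd hlen
  have hy := fry_isDyck hd hlen
  have hev : Even (frx w).length := even_length_of_sum_eq_zero hx.1 hx.2.2
  obtain ⟨k, hk⟩ := hev
  refine ⟨k, by omega, by omega, ?_, ?_⟩
  · rw [mem_D]; exact ⟨hx, by omega⟩
  · rw [mem_D]; exact ⟨hy, by omega⟩

lemma sum_D_succ (m : ℕ) (G : List ℤ → ℤ) :
    ∑ w ∈ D (m+1), G w
      = ∑ k ∈ range (m+1), ∑ x ∈ D k, ∑ y ∈ D (m-k), G (glue x y) := by
  have hrhs : ∑ k ∈ range (m+1), ∑ x ∈ D k, ∑ y ∈ D (m-k), G (glue x y)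
      = ∑ p ∈ (range (m+1)).sigma (fun k => D k ×ˢ D (m-k)), G (glue p.2.1 p.2.2) := by
    rw [Finset.sum_sigma]
    exact sum_congr rfl fun k _ => by rw [Finset.sum_product]
  rw [hrhs]
  refine Finset.sum_nbij' (i := fun w => (⟨(fr w - 2)/2, (frx w, fry w)⟩ : Σ _ : ℕ, List ℤ × List ℤ))
    (j := fun p => glue p.2.1 p.2.2) ?_ ?_ ?_ ?_ ?_
  · intro w hw
    obtain ⟨k, hkm, hfr, hx, hy⟩ := frx_fry_mem hw
    rw [Finset.mem_sigma, Finset.mem_product]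
    dsimp only
    rw [hfr]
    refine ⟨by simp; omega, ?_⟩
    simpa [show (2*k+2-2)/2 = k by omega] using And.intro hx hy
  · intro p hp
    rw [Finset.mem_sigma, Finset.mem_product] at hp
    obtain ⟨hk, hx, hy⟩ := hp
    have := glue_mem_D hx hy
    rw [show p.1 + (m - p.1) + 1 = m + 1 by simp at hk; omega] at this
    exact this
  · intro w hw
    rw [mem_D] at hw
    exact glue_frx_fry hw.1 (by omega)
  · intro p hp
    rw [Finset.mem_sigma, Finset.mem_product] at hp
    obtain ⟨hk, hx, hy⟩ := hp
    rw [mem_D] at hx hy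
    obtain ⟨p1, p2, p3⟩ := p
    dsimp only at *
    have hg : glue p2 p3 ∈ D (m+1) := by
      have := glue_mem_D (mem_D.2 hx) (mem_D.2 hy)
      rw [show p1 + (m - p1) + 1 = m + 1 by simp at hk; omega] at this
      exact this
    have hfr : fr (glue p2 p3) = 2*p1 + 2 := by
      rw [fr_glue hx.1 hy.1, hx.2]
    have hgd := (mem_D.1 hg).1
    have hgl : 0 < (glue p2 p3).length := by rw [glue_length]; omega
    have heq : glue (frx (glue p2 p3)) (fry (glue p2 p3)) = glue p2 p3 :=
      glue_frx_fry hgd hgl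
    have hxl : (frx (glue p2 p3)).length = p2.length := by
      rw [frx_length hgd hgl, hfr, hx.2]; omega
    have e1 : (1:ℤ) :: frx (glue p2 p3) = 1 :: p2 ∧
        (-1:ℤ) :: fry (glue p2 p3) = -1 :: p3 := by
      apply List.append_inj
      · exact heq
      · simp [hxl]
    obtain ⟨e1a, e1b⟩ := e1
    simp only [List.cons.injEq] at e1a e1b
    have hk2 : (fr (glue p2 p3) - 2)/2 = p1 := by rw [hfr]; omega
    rw [hk2, e1a.2, e1b.2]
  · intro w hw
    rw [mem_D] at hw
    rw [glue_frx_fry hw.1 (by omega)]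

/-- sum of heights at all lattice points of the path -/
noncomputable def Hs (w : List ℤ) : ℤ := ∑ i ∈ range (w.length + 1), psum w i

noncomputable def cz (m : ℕ) : ℤ := ((D m).card : ℤ)

noncomputable def Az (m : ℕ) : ℤ := ∑ w ∈ D m, Hs w

noncomputable def Nz (m : ℕ) : ℤ := Az m + (2*m+1) * cz m

lemma Hs_glue {x y : List ℤ} (hx0 : x.sum = 0) :
    Hs (glue x y) = Hs x + Hs y + (x.length + 1) := by
  have hL : (glue x y).length + 1 = (x.length + 2) + (y.length + 1) := by
    rw [glue_length]; ring
  rw [Hs, hL, sum_range_add']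
  have h2 : ∑ i ∈ Finset.range (y.length + 1), psum (glue x y) (x.length + 2 + i) = Hs y := by
    rw [Hs]
    apply sum_congr rfl
    intro i _
    rw [psum_glue_right, hx0, zero_add]
  have h1 : ∑ i ∈ Finset.range (x.length + 2), psum (glue x y) i
      = Hs x + (x.length + 1) := by
    rw [Finset.sum_range_succ']
    have : ∀ i ∈ Finset.range (x.length + 1), psum (glue x y) (i+1) = 1 + psum x i := by
      intro i hi
      exact psum_glue_left x y (by simp at hi; omega)
    rw [sum_congr rfl this, Finset.sum_add_distrib]
    simp [Hs, add_comm]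
  rw [h1, h2]
  ring

lemma cz_rec (m : ℕ) : cz (m+1) = ∑ k ∈ range (m+1), cz k * cz (m-k) := by
  have := sum_D_succ m (fun _ => (1:ℤ))
  simp only [Finset.sum_const, nsmul_eq_mul, mul_one] at this
  simp only [cz]
  exact this

lemma Az_rec (m : ℕ) :
    Az (m+1) = ∑ k ∈ range (m+1),
      (Az k * cz (m-k) + cz k * Az (m-k) + (2*k+1) * (cz k * cz (m-k))) := by
  rw [Az, sum_D_succ m Hs]
  apply sum_congr rfl
  intro k hk
  have hglue : ∀ x ∈ D k, ∀ y ∈ D (m-k), Hs (glue x y) = Hs x + Hs y + (2*k+1) := by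
    intro x hx y hy
    rw [mem_D] at hx
    rw [Hs_glue hx.1.2.2, hx.2]
    push_cast
    ring
  calc ∑ x ∈ D k, ∑ y ∈ D (m-k), Hs (glue x y)
      = ∑ x ∈ D k, ∑ y ∈ D (m-k), (Hs x + Hs y + (2*k+1)) := by
        apply sum_congr rfl; intro x hx; apply sum_congr rfl; intro y hy
        exact hglue x hx y hy
    _ = ∑ x ∈ D k, ((cz (m-k)) * (Hs x + (2*k+1)) + Az (m-k)) := by
        apply sum_congr rfl; intro x _
        rw [Finset.sum_add_distrib, Finset.sum_add_distrib, Finset.sum_const, Az]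
        simp [cz]
        ring
    _ = Az k * cz (m-k) + cz k * Az (m-k) + (2*k+1) * (cz k * cz (m-k)) := by
        rw [Finset.sum_add_distrib, Finset.sum_const, ← Finset.mul_sum,
          Finset.sum_add_distrib, Finset.sum_const]
        simp only [cz, Az, nsmul_eq_mul]
        ring

lemma D_zero : D 0 = {[]} := by
  apply Finset.ext
  intro w
  rw [mem_D]
  simp only [Finset.mem_singleton]
  constructor
  · rintro ⟨-, h⟩; exact List.length_eq_zero_iff.1 (by omega)
  · rintro rfl
    exact ⟨⟨fun s hs => by simp at hs, fun i => by simp, rfl⟩, rfl⟩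

lemma cz_zero : cz 0 = 1 := by rw [cz, D_zero]; simp

lemma cN_rec (m : ℕ) :
    (D (m+1)).card = ∑ k ∈ range (m+1), (D k).card * (D (m-k)).card := by
  have := cz_rec m
  simp only [cz] at this
  exact_mod_cast this

lemma card_D_eq_catalan (m : ℕ) : (D m).card = catalan m := by
  induction m using Nat.strong_induction_on with
  | _ m ih =>
    match m with
    | 0 => rw [D_zero]; simp
    | (m+1) =>
      rw [cN_rec, catalan_succ,
        Fin.sum_univ_eq_sum_range (fun i => catalan i * catalan (m - i)) (m+1)]
      apply sum_congr rfl
      intro k hk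
      simp only [mem_range] at hk
      rw [ih k (by omega), ih (m-k) (by omega)]

lemma cz_eq (m : ℕ) : cz m = (catalan m : ℤ) := by
  rw [cz, card_D_eq_catalan]

lemma catalan_ratio (r : ℕ) : (r+2) * catalan (r+1) = 2*(2*r+1) * catalan r := by
  apply Nat.eq_of_mul_eq_mul_left (show 0 < r + 1 by omega)
  calc (r+1) * ((r+2) * catalan (r+1)) = (r+1) * Nat.centralBinom (r+1) := by
        rw [succ_mul_catalan_eq_centralBinom]
    _ = 2*(2*r+1) * Nat.centralBinom r := Nat.succ_mul_centralBinom_succ r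
    _ = 2*(2*r+1) * ((r+1) * catalan r) := by rw [succ_mul_catalan_eq_centralBinom]
    _ = (r+1) * (2*(2*r+1) * catalan r) := by ring

lemma cz_ratio (m : ℕ) : ((m:ℤ)+3) * cz (m+2) = (4*(m:ℤ)+6) * cz (m+1) := by
  have h2 : (m+3) * catalan (m+2) = 2*(2*(m+1)+1) * catalan (m+1) := catalan_ratio (m+1)
  rw [cz_eq, cz_eq]
  zify at h2
  linear_combination h2

lemma key_id (m : ℕ) :
    2 * ∑ k ∈ range (m+1), 4^k * cz (m-k) = 4^(m+1) - ((m:ℤ)+2) * cz (m+1) := by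
  induction m with
  | zero =>
    simp [cz_zero, cz_eq, catalan_one]
  | succ m ih =>
    rw [Finset.sum_range_succ']
    have hcong : ∀ k ∈ range (m+1), (4:ℤ)^(k+1) * cz (m+1-(k+1)) = 4 * (4^k * cz (m-k)) := by
      intro k hk
      rw [show m+1-(k+1) = m-k by omega, pow_succ]
      ring
    rw [sum_congr rfl hcong, ← Finset.mul_sum]
    simp only [pow_zero, one_mul, Nat.sub_zero]
    rw [mul_add, show (2:ℤ) * (4 * ∑ k ∈ range (m+1), 4^k * cz (m-k))
        = 4 * (2 * ∑ k ∈ range (m+1), 4^k * cz (m-k)) by ring, ih]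
    have := cz_ratio m
    push_cast
    linear_combination this

lemma Az_zero : Az 0 = 0 := by
  rw [Az, D_zero]
  simp [Hs]

lemma refl_sum (f : ℕ → ℤ) (m : ℕ) :
    ∑ k ∈ range (m+1), f k = ∑ k ∈ range (m+1), f (m - k) := by
  have := Finset.sum_range_reflect f (m+1)
  simp only [Nat.succ_sub_one] at this
  exact this.symm

lemma Nz_eq (m : ℕ) : Nz m = 4^m := by
  induction m using Nat.strong_induction_on with
  | _ m ih =>
    match m with
    | 0 => rw [Nz, Az_zero, cz_zero]; norm_num
    | (m+1) =>
      have hsum : ∀ k ∈ range (m+1),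
          (Az k * cz (m-k) + cz k * Az (m-k) + (2*(k:ℤ)+1) * (cz k * cz (m-k)))
          = 4^k * cz (m-k) + cz k * 4^(m-k) - (2*((m:ℤ)-k)+1) * (cz k * cz (m-k)) := by
        intro k hk
        simp only [mem_range] at hk
        have h1 : Az k = Nz k - (2*(k:ℤ)+1) * cz k := by rw [Nz]; ring
        have h2 : Az (m-k) = Nz (m-k) - (2*((m-k:ℕ):ℤ)+1) * cz (m-k) := by rw [Nz]; ring
        rw [h1, h2, ih k (by omega), ih (m-k) (by omega)]
        have hc : ((m-k:ℕ):ℤ) = (m:ℤ) - k := by omega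
        rw [hc]
        ring
      have ha : ∑ k ∈ range (m+1), cz k * 4^(m-k) = ∑ k ∈ range (m+1), 4^k * cz (m-k) := by
        rw [refl_sum (fun k => cz k * 4^(m-k)) m]
        apply sum_congr rfl
        intro k hk
        simp only [mem_range] at hk
        rw [show m - (m - k) = k by omega]
        ring
      have hswap : ∑ k ∈ range (m+1), (2*((m:ℤ)-k)+1) * (cz k * cz (m-k))
          = ∑ k ∈ range (m+1), (2*(k:ℤ)+1) * (cz k * cz (m-k)) := by
        rw [refl_sum (fun k => (2*((m:ℤ)-k)+1) * (cz k * cz (m-k))) m]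
        apply sum_congr rfl
        intro k hk
        simp only [mem_range] at hk
        rw [show m - (m - k) = k by omega]
        have hc : ((m-k:ℕ):ℤ) = (m:ℤ) - k := by omega
        rw [hc]
        ring
      have hb : ∑ k ∈ range (m+1), (2*((m:ℤ)-k)+1) * (cz k * cz (m-k))
          = ((m:ℤ)+1) * cz (m+1) := by
        have hdouble : ∑ k ∈ range (m+1),
            ((2*((m:ℤ)-k)+1) * (cz k * cz (m-k)) + (2*(k:ℤ)+1) * (cz k * cz (m-k)))
            = (2*(m:ℤ)+2) * cz (m+1) := by
          have hpt : ∀ k ∈ range (m+1),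
              ((2*((m:ℤ)-k)+1) * (cz k * cz (m-k)) + (2*(k:ℤ)+1) * (cz k * cz (m-k)))
              = (2*(m:ℤ)+2) * (cz k * cz (m-k)) := by
            intro k hk
            ring
          rw [sum_congr rfl hpt, ← Finset.mul_sum, ← cz_rec]
        rw [Finset.sum_add_distrib, ← hswap] at hdouble
        linarith
      have hkey := key_id m
      rw [Nz, Az_rec, sum_congr rfl hsum]
      simp only [Finset.sum_add_distrib, Finset.sum_sub_distrib]
      rw [ha, hb]
      push_cast
      linarith

open Classical in
/-- pointed Dyck paths with a level label -/
noncomputable def U (m : ℕ) : Finset (List ℤ × ℕ × ℕ) :=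
  ((SW (2*m)) ×ˢ (range (2*m+1) ×ˢ range (2*m+2))).filter
    (fun t => IsDyckPath t.1 ∧ 1 ≤ t.2.2 ∧ (t.2.2 : ℤ) ≤ psum t.1 t.2.1 + 1)

lemma indicator_count (B : ℤ) (hB : 0 ≤ B) (K : ℕ) (hK : B ≤ K) :
    ∑ μ ∈ range (K+1), (if (1 ≤ μ ∧ (μ:ℤ) ≤ B) then (1:ℤ) else 0) = B := by
  classical
  have hfil : (range (K+1)).filter (fun μ : ℕ => 1 ≤ μ ∧ (μ:ℤ) ≤ B) = Finset.Icc 1 B.toNat := by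
    ext μ
    simp only [Finset.mem_filter, Finset.mem_range, Finset.mem_Icc]
    constructor
    · rintro ⟨h1, h2, h3⟩; exact ⟨h2, by omega⟩
    · rintro ⟨h1, h2⟩; exact ⟨by omega, h1, by omega⟩
  rw [Finset.sum_boole, hfil, Nat.card_Icc]
  push_cast
  omega

lemma U_card (m : ℕ) : ((U m).card : ℤ) = Nz m := by
  classical
  rw [U, Finset.card_filter, Finset.sum_product]
  push_cast
  have hstep : ∀ w ∈ SW (2*m),
      (∑ q ∈ range (2*m+1) ×ˢ range (2*m+2),
        if IsDyckPath w ∧ 1 ≤ q.2 ∧ ((q.2:ℕ):ℤ) ≤ psum w q.1 + 1 then (1:ℤ) else 0)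
      = if IsDyckPath w then Hs w + (2*m+1) else 0 := by
    intro w hw
    have hwl : w.length = 2*m := (mem_SW.1 hw).2
    have hws : IsStepWord w := (mem_SW.1 hw).1
    rw [Finset.sum_product]
    by_cases hD : IsDyckPath w
    · simp only [hD, true_and, if_true]
      have hinner : ∀ i ∈ range (2*m+1),
          (∑ μ ∈ range (2*m+2), if 1 ≤ μ ∧ ((μ:ℕ):ℤ) ≤ psum w i + 1 then (1:ℤ) else 0)
          = psum w i + 1 := by
        intro i hi
        simp only [mem_range] at hi
        have h1 : 0 ≤ psum w i + 1 := by have := hD.2.1 i; omega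
        have h2 : psum w i + 1 ≤ (2*m+1 : ℕ) := by
          have := psum_le w hws i
          push_cast
          omega
        exact indicator_count _ h1 _ h2
      rw [sum_congr rfl hinner, Finset.sum_add_distrib, Finset.sum_const]
      rw [Hs, hwl]
      simp only [Finset.card_range]
      push_cast
      ring
    · simp only [hD, false_and, if_false]
      simp
  rw [sum_congr rfl hstep]
  rw [← Finset.sum_filter]
  rw [Nz, Az]
  have : (SW (2*m)).filter (fun w => IsDyckPath w) = D m := rfl
  rw [this, Finset.sum_add_distrib, Finset.sum_const]
  simp only [cz, nsmul_eq_mul]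
  push_cast
  ring

lemma peak_psum {w : List ℤ} {i : ℕ} (h1 : i + 1 < w.length)
    (h2 : w[i] = 1) (h3 : w[i+1] = -1) :
    psum w (i+1) = psum w i + 1 ∧ psum w (i+2) = psum w i := by
  have e1 := psum_succ (w := w) (t := i) (by omega)
  have e2 : psum w (i+2) = psum w (i+1) + w[i+1] := by
    rw [show i+2 = i+1+1 by omega]
    exact psum_succ h1
  rw [h2] at e1
  rw [h3] at e2
  constructor <;> omega

open Classical in
/-- labeled peaks of Dyck paths -/
noncomputable def T (n : ℕ) : Finset (List ℤ × ℕ × ℕ) :=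
  ((SW (2*n)) ×ˢ (range (2*n) ×ˢ range (2*n+2))).filter
    (fun t => IsDyckPath t.1 ∧ IsPeak t.1 t.2.1 ∧ 1 ≤ t.2.2 ∧
      (t.2.2:ℤ) ≤ peakHeight t.1 t.2.1)

lemma removePeak_mem {m : ℕ} {w : List ℤ} {i μ : ℕ} (hw : IsDyckPath w)
    (hl : w.length = 2*m+2) (hp : IsPeak w i) (hμ1 : 1 ≤ μ)
    (hμ2 : (μ:ℤ) ≤ peakHeight w i) :
    (w.take i ++ w.drop (i+2), (i, μ)) ∈ U m := by
  classical
  obtain ⟨hi, hwi⟩ := List.getElem?_eq_some_iff.1 hp.1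
  obtain ⟨hi1, hwi1⟩ := List.getElem?_eq_some_iff.1 hp.2
  obtain ⟨e1, e2⟩ := peak_psum hi1 hwi hwi1
  set Q := w.take i ++ w.drop (i+2) with hQ
  have hti : (w.take i).length = i := by rw [List.length_take]; omega
  have hQl : Q.length = 2*m := by
    rw [hQ, List.length_append, hti, List.length_drop]; omega
  have hq2 : ∀ t, t ≤ i → psum Q t = psum w t := by
    intro t ht
    rw [hQ, psum_append_left _ (by omega), psum_take, min_eq_left ht]
  have hsumtake : (w.take i).sum = psum w i := rfl
  have hq3 : ∀ r, psum Q (i + r) = psum w (i + 2 + r) := by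
    intro r
    have h := psum_append_right (w.take i) (w.drop (i+2)) r
    rw [hti, hsumtake] at h
    calc psum Q (i+r) = psum w i + psum (w.drop (i+2)) r := h
      _ = psum w i + (psum w (i + 2 + r) - psum w (i+2)) := by rw [psum_drop]
      _ = psum w (i+2+r) := by rw [e2]; ring
  have hQd : IsDyckPath Q := by
    refine ⟨?_, ?_, ?_⟩
    · intro s hs
      rcases List.mem_append.1 hs with h | h
      · exact hw.1 s (List.mem_of_mem_take h)
      · exact hw.1 s (List.mem_of_mem_drop h)
    · intro t
      rcases le_or_gt t i with h | h
      · rw [hq2 t h]; exact hw.2.1 t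
      · obtain ⟨r, rfl⟩ : ∃ r, t = i + r := ⟨t - i, by omega⟩
        rw [hq3 r]; exact hw.2.1 _
    · have : Q.sum = psum Q (i + (2*m - i)) := (psum_of_length_le (by omega)).symm
      rw [this, hq3, show i + 2 + (2*m - i) = 2*m+2 by omega, psum_of_length_le (by omega),
        hw.2.2]
  have hμB : (μ:ℤ) ≤ psum Q i + 1 := by
    rw [hq2 i le_rfl]
    have : peakHeight w i = psum w i + 1 := e1
    rw [this] at hμ2
    exact hμ2
  rw [U, Finset.mem_filter]
  refine ⟨?_, hQd, hμ1, hμB⟩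
  rw [Finset.mem_product, Finset.mem_product]
  refine ⟨mem_SW.2 ⟨hQd.1, hQl⟩, ?_, ?_⟩
  · simp only [mem_range]; omega
  · simp only [mem_range]
    have hple := psum_le Q hQd.1 i
    have hpos := hQd.2.1 i
    omega

lemma addPeak_mem {m : ℕ} {Q : List ℤ} {i μ : ℕ} (hQ : IsDyckPath Q)
    (hl : Q.length = 2*m) (hi : i ≤ 2*m) (hμ1 : 1 ≤ μ) (hμ2 : (μ:ℤ) ≤ psum Q i + 1) :
    (Q.take i ++ ((1:ℤ) :: (-1:ℤ) :: Q.drop i), (i, μ)) ∈ T (m+1) := by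
  classical
  set P := Q.take i ++ ((1:ℤ) :: (-1:ℤ) :: Q.drop i) with hP
  have hti : (Q.take i).length = i := by rw [List.length_take]; omega
  have hPl : P.length = 2*(m+1) := by
    rw [hP, List.length_append, hti]; simp [List.length_drop]; omega
  have hq2 : ∀ t, t ≤ i → psum P t = psum Q t := by
    intro t ht
    rw [hP, psum_append_left _ (by omega), psum_take, min_eq_left ht]
  have hsumtake : (Q.take i).sum = psum Q i := rfl
  have hq3 : ∀ r, psum P (i + r) = psum Q i + psum ((1:ℤ) :: (-1:ℤ) :: Q.drop i) r := by
    intro r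
    have := psum_append_right (Q.take i) ((1:ℤ) :: (-1:ℤ) :: Q.drop i) r
    rw [hti, hsumtake] at this
    exact this
  have hmid : ∀ r, psum ((1:ℤ) :: (-1:ℤ) :: Q.drop i) (2 + r) = psum (Q.drop i) r := by
    intro r
    rw [show 2 + r = (r + 1) + 1 by omega, psum_cons, psum_cons]
    ring
  have hPd : IsDyckPath P := by
    refine ⟨?_, ?_, ?_⟩
    · intro s hs
      rcases List.mem_append.1 hs with h | h
      · exact hQ.1 s (List.mem_of_mem_take h)
      · rcases List.mem_cons.1 h with rfl | h
        · left; rfl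
        · rcases List.mem_cons.1 h with rfl | h
          · right; rfl
          · exact hQ.1 s (List.mem_of_mem_drop h)
    · intro t
      rcases le_or_gt t i with h | h
      · rw [hq2 t h]; exact hQ.2.1 t
      · obtain ⟨r, rfl⟩ : ∃ r, t = i + r := ⟨t - i, by omega⟩
        rw [hq3 r]
        match r with
        | 0 => simp; exact hQ.2.1 i
        | 1 =>
          have : psum ((1:ℤ) :: (-1:ℤ) :: Q.drop i) 1 = 1 := by
            rw [show (1:ℕ) = 0 + 1 from rfl, psum_cons]; simp
          rw [this]
          have := hQ.2.1 i; omega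
        | (r+2) =>
          rw [show r + 2 = 2 + r by omega, hmid, psum_drop]
          have := hQ.2.1 (i + r); omega
    · have : P.sum = psum P (i + (2 + (2*m - i))) := by
        rw [psum_of_length_le (by omega)]
      rw [this, hq3, hmid, psum_drop, show i + (2*m - i) = 2*m by omega,
        psum_of_length_le (w := Q) (i := 2*m) (by omega), hQ.2.2]
      ring
  have hpk : IsPeak P i := by
    constructor
    · rw [hP, List.getElem?_append_right (by omega), hti]
      simp
    · rw [hP, List.getElem?_append_right (by omega), hti]
      simp [show i + 1 - i = 1 by omega]
  have hph : peakHeight P i = psum Q i + 1 := by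
    rw [peakHeight, show i + 1 = i + 1 by rfl]
    have := hq3 1
    rw [show i + 1 = i + 1 by rfl] at this
    have h1 : psum ((1:ℤ) :: (-1:ℤ) :: Q.drop i) 1 = 1 := by
      rw [show (1:ℕ) = 0 + 1 from rfl, psum_cons]; simp
    rw [this, h1]
  rw [T, Finset.mem_filter]
  refine ⟨?_, hPd, hpk, hμ1, by rw [hph]; exact hμ2⟩
  rw [Finset.mem_product, Finset.mem_product]
  refine ⟨mem_SW.2 ⟨hPd.1, hPl⟩, ?_, ?_⟩
  · simp only [mem_range]; omega
  · simp only [mem_range]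
    have := psum_le Q hQ.1 i
    have := hQ.2.1 i
    omega

lemma T_card_eq (m : ℕ) : (T (m+1)).card = (U m).card := by
  classical
  apply Finset.card_bij'
    (i := fun t (_ : t ∈ T (m+1)) => (t.1.take t.2.1 ++ t.1.drop (t.2.1+2), (t.2.1, t.2.2)))
    (j := fun t (_ : t ∈ U m) => (t.1.take t.2.1 ++ ((1:ℤ) :: (-1:ℤ) :: t.1.drop t.2.1), (t.2.1, t.2.2)))
  · intro t ht
    rw [T, Finset.mem_filter, Finset.mem_product, Finset.mem_product] at ht
    obtain ⟨⟨hsw, hrest⟩, hd, hpk, hμ1, hμ2⟩ := ht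
    exact removePeak_mem hd (by have := (mem_SW.1 hsw).2; omega) hpk hμ1 hμ2
  · intro t ht
    rw [U, Finset.mem_filter, Finset.mem_product, Finset.mem_product] at ht
    obtain ⟨⟨hsw, hi, hμ⟩, hd, hμ1, hμ2⟩ := ht
    simp only [mem_range] at hi
    exact addPeak_mem hd (mem_SW.1 hsw).2 (by have := (mem_SW.1 hsw).2; omega) hμ1 hμ2
  · intro t ht
    rw [T, Finset.mem_filter, Finset.mem_product, Finset.mem_product] at ht
    obtain ⟨⟨hsw, hrest⟩, hd, hpk, hμ1, hμ2⟩ := ht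
    obtain ⟨w, i, μ⟩ := t
    dsimp only at *
    obtain ⟨hi, hwi⟩ := List.getElem?_eq_some_iff.1 hpk.1
    obtain ⟨hi1, hwi1⟩ := List.getElem?_eq_some_iff.1 hpk.2
    have hti : (w.take i).length = i := by rw [List.length_take]; omega
    have h1 : (w.take i ++ w.drop (i+2)).take i = w.take i := List.take_left' hti
    have h2 : (w.take i ++ w.drop (i+2)).drop i = w.drop (i+2) := List.drop_left' hti
    rw [h1, h2]
    have hdrop : w.drop i = (1:ℤ) :: (-1:ℤ) :: w.drop (i+2) := by
      have e1 := (List.getElem_cons_drop hi).symm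
      have e2 := (List.getElem_cons_drop hi1).symm
      rw [show i+1+1 = i+2 by omega] at e2
      rw [e1, hwi, e2, hwi1]
    rw [← hdrop, List.take_append_drop]
  · intro t ht
    rw [U, Finset.mem_filter, Finset.mem_product, Finset.mem_product] at ht
    obtain ⟨⟨hsw, hi, hμ⟩, hd, hμ1, hμ2⟩ := ht
    obtain ⟨Q, i, μ⟩ := t
    dsimp only at *
    simp only [mem_range] at hi
    have hil : i ≤ Q.length := by rw [(mem_SW.1 hsw).2]; omega
    have hti : (Q.take i).length = i := by rw [List.length_take]; omega
    have h1 : (Q.take i ++ ((1:ℤ) :: (-1:ℤ) :: Q.drop i)).take i = Q.take i :=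
      List.take_left' hti
    have h2 : (Q.take i ++ ((1:ℤ) :: (-1:ℤ) :: Q.drop i)).drop (i+2) = Q.drop i := by
      have hassoc : Q.take i ++ ((1:ℤ) :: (-1:ℤ) :: Q.drop i)
          = (Q.take i ++ [(1:ℤ), (-1:ℤ)]) ++ Q.drop i := by simp
      rw [hassoc]
      exact List.drop_left' (by rw [List.length_append, hti]; rfl)
    rw [h1, h2, List.take_append_drop]

lemma U_card_pow (m : ℕ) : (U m).card = 4^m := by
  have h1 := U_card m
  rw [Nz_eq] at h1
  exact_mod_cast h1

theorem heightLabeledPeaks_card (n : ℕ) (hn : 1 ≤ n) :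
    Nat.card {t : List ℤ × ℕ × ℕ //
        IsDyckPath t.1 ∧ t.1.length = 2 * n ∧ IsPeak t.1 t.2.1 ∧
          1 ≤ t.2.2 ∧ (t.2.2 : ℤ) ≤ peakHeight t.1 t.2.1} =
      4 ^ (n - 1) := by
  classical
  obtain ⟨m, rfl⟩ : ∃ m, n = m + 1 := ⟨n - 1, by omega⟩
  have hset : {t : List ℤ × ℕ × ℕ |
      IsDyckPath t.1 ∧ t.1.length = 2 * (m+1) ∧ IsPeak t.1 t.2.1 ∧
        1 ≤ t.2.2 ∧ (t.2.2 : ℤ) ≤ peakHeight t.1 t.2.1} = ↑(T (m+1)) := by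
    ext t
    rw [Set.mem_setOf_eq, Finset.mem_coe, T, Finset.mem_filter, Finset.mem_product,
      Finset.mem_product]
    constructor
    · rintro ⟨hd, hl, hpk, hμ1, hμ2⟩
      obtain ⟨hi1, -⟩ := List.getElem?_eq_some_iff.1 hpk.2
      refine ⟨⟨mem_SW.2 ⟨hd.1, hl⟩, ?_, ?_⟩, hd, hpk, hμ1, hμ2⟩
      · simp only [mem_range]; omega
      · simp only [mem_range]
        have hμ2' : ((t.2.2 : ℕ):ℤ) ≤ psum t.1 (t.2.1+1) := hμ2
        have h2 := psum_le t.1 hd.1 (t.2.1+1)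
        omega
    · rintro ⟨⟨hsw, hrange⟩, hd, hpk, hμ1, hμ2⟩
      exact ⟨hd, (mem_SW.1 hsw).2, hpk, hμ1, hμ2⟩
  have hcard : Nat.card {t : List ℤ × ℕ × ℕ //
      IsDyckPath t.1 ∧ t.1.length = 2 * (m+1) ∧ IsPeak t.1 t.2.1 ∧
        1 ≤ t.2.2 ∧ (t.2.2 : ℤ) ≤ peakHeight t.1 t.2.1}
      = ({t : List ℤ × ℕ × ℕ |
      IsDyckPath t.1 ∧ t.1.length = 2 * (m+1) ∧ IsPeak t.1 t.2.1 ∧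
        1 ≤ t.2.2 ∧ (t.2.2 : ℤ) ≤ peakHeight t.1 t.2.1} : Set _).ncard :=
    Nat.card_coe_set_eq _
  rw [hcard, hset, Set.ncard_coe_finset, T_card_eq, U_card_pow]
  congr 1
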